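/- arXiv:2303.05228 — 3 statements merged into one kernel-verified Lean document; each statement's English description precedes it below -/
import Mathlib

section
/- A no-boundary cellular automaton with a bipermutive local rule, restricted to input length 2b, defines a Latin square of order 2^b: for the map F : F_2^b × F_2^b → F_2^b given by applying a bipermutive rule f of diameter d = b+1 at positions 1,…,b of the concatenated input, both F(·, y) for each fixed y and F(x, ·) for each fixed x are bijections of F_2^b. -/
/-- A no-boundary CA with a bipermutive local rule of diameter `d = b + 1`
(here `b = m + 1`), restricted to inputs of length `2b`, defines a Latin square
of order `2^b`: the induced map `F : F_2^b × F_2^b → F_2^b` is a bijection in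
each argument separately. -/
theorem bipermutive_ca_is_latin_square (m : ℕ)
    (f : (Fin (m + 2) → ZMod 2) → ZMod 2)
    (g : (Fin m → ZMod 2) → ZMod 2)
    (hf : ∀ x, f x = x 0 + g (fun i => x i.succ.castSucc) + x (Fin.last (m + 1)))
    (F : (Fin (m + 1) → ZMod 2) → (Fin (m + 1) → ZMod 2) → Fin (m + 1) → ZMod 2)
    (hF : ∀ x y (i : Fin (m + 1)), F x y i =
      f (fun j : Fin (m + 2) => Fin.append x y
        ⟨i.val + j.val, by have := i.isLt; have := j.isLt; omega⟩)) :
    (∀ y, Function.Bijective (fun x => F x y)) ∧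
    (∀ x, Function.Bijective (F x)) := by
  have happ : ∀ (x y : Fin (m+1) → ZMod 2) (k : ℕ) (hk : k < (m+1)+(m+1)),
      Fin.append x y ⟨k, hk⟩ =
        if h : k < m + 1 then x ⟨k, h⟩ else y ⟨k - (m+1), by omega⟩ := by
    intro x y k hk
    split_ifs with h
    · have e : (⟨k, hk⟩ : Fin ((m+1)+(m+1))) = Fin.castAdd (m+1) ⟨k, h⟩ := rfl
      rw [e, Fin.append_left]
    · have e : (⟨k, hk⟩ : Fin ((m+1)+(m+1))) = Fin.natAdd (m+1) ⟨k - (m+1), by omega⟩ := by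
        ext; simp; omega
      rw [e, Fin.append_right]
  have hFx : ∀ x y (i : Fin (m+1)), F x y i =
      x i + g (fun j : Fin m => Fin.append x y ⟨i.val + j.val + 1, by omega⟩) + y i := by
    intro x y i
    rw [hF, hf]
    have h1 : Fin.append x y ⟨i.val + (0 : Fin (m+2)).val, by omega⟩ = x i := by
      rw [happ, dif_pos (by simp [i.isLt])]
      congr 1
    have h3 : Fin.append x y ⟨i.val + (Fin.last (m+1)).val, by omega⟩ = y i := by
      rw [happ, dif_neg (by simp; omega)]
      congr 1
      ext; simp
    exact congr_arg₂ _ (congr_arg₂ _ h1 rfl) h3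
  have injx : ∀ y, Function.Injective (fun x => F x y) := by
    intro y x x' h
    have h' : ∀ i, F x y i = F x' y i := fun i => congrFun h i
    have key : ∀ n (i : Fin (m+1)), m - i.val < n → x i = x' i := by
      intro n
      induction n with
      | zero => intro i hi; omega
      | succ n ih =>
        intro i hi
        have hg : g (fun j : Fin m => Fin.append x y ⟨i.val + j.val + 1, by omega⟩)
            = g (fun j : Fin m => Fin.append x' y ⟨i.val + j.val + 1, by omega⟩) := by
          apply congrArg
          funext j
          rw [happ, happ]
          split_ifs with hl
          · exact ih ⟨i.val + j.val + 1, hl⟩ (by show m - (i.val + j.val + 1) < n; omega)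
          · rfl
        have hi' := h' i
        rw [hFx, hFx, hg] at hi'
        exact add_right_cancel (add_right_cancel hi')
    funext i
    exact key (m+1) i (by omega)
  have injy : ∀ x, Function.Injective (F x) := by
    intro x y y' h
    have h' : ∀ i, F x y i = F x y' i := fun i => congrFun h i
    have key : ∀ n (i : Fin (m+1)), i.val < n → y i = y' i := by
      intro n
      induction n with
      | zero => intro i hi; omega
      | succ n ih =>
        intro i hi
        have hg : g (fun j : Fin m => Fin.append x y ⟨i.val + j.val + 1, by omega⟩)
            = g (fun j : Fin m => Fin.append x y' ⟨i.val + j.val + 1, by omega⟩) := by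
          apply congrArg
          funext j
          rw [happ, happ]
          split_ifs with hl
          · rfl
          · exact ih ⟨i.val + j.val + 1 - (m+1), by omega⟩ (by show i.val + j.val + 1 - (m+1) < n; omega)
        have hi' := h' i
        rw [hFx, hFx, hg] at hi'
        exact add_left_cancel hi'
    funext i
    exact key (m+1) i (by omega)
  exact ⟨fun y => Finite.injective_iff_bijective.mp (injx y),
         fun x => Finite.injective_iff_bijective.mp (injy x)⟩
end

section
/- For a no-boundary cellular automaton F : F_2^n → F_2^{n−d+1} with local rule f : F_2^d → F_2 of degree at least 1, every nonzero component function v·F has algebraic degree equal to the algebraic degree of f. -/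
/-- The binary Möbius transform, giving the ANF coefficients of `f`. -/
def moebius {n : ℕ} (f : (Fin n → ZMod 2) → ZMod 2) : (Fin n → ZMod 2) → ZMod 2 :=
  fun u => ∑ x ∈ Finset.univ.filter (fun x : Fin n → ZMod 2 => ∀ i, x i ≠ 0 → u i ≠ 0), f x

/-- The algebraic degree of a Boolean function: the maximal Hamming weight of a
monomial with nonzero ANF coefficient. -/
def degB {n : ℕ} (f : (Fin n → ZMod 2) → ZMod 2) : ℕ :=
  (Finset.univ.filter (fun u : Fin n → ZMod 2 => moebius f u ≠ 0)).sup
    (fun u => (Finset.univ.filter (fun i => u i ≠ 0)).card)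

namespace CAaux

variable {m d : ℕ}

def wt {n : ℕ} (u : Fin n → ZMod 2) : ℕ := (Finset.univ.filter (fun i => u i ≠ 0)).card

def win (i : Fin (m + 1)) (x : Fin (m + d) → ZMod 2) : Fin d → ZMod 2 :=
  fun j => x ⟨i.val + j.val, by have := i.isLt; have := j.isLt; omega⟩

def ext (i : Fin (m + 1)) (y : Fin d → ZMod 2) : Fin (m + d) → ZMod 2 :=
  fun j => if h : i.val ≤ j.val ∧ j.val < i.val + d then y ⟨j.val - i.val, by omega⟩ else 0

def inWin (i : Fin (m + 1)) (w : Fin (m + d) → ZMod 2) : Prop :=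
  ∀ j, w j ≠ 0 → i.val ≤ j.val ∧ j.val < i.val + d

instance (i : Fin (m + 1)) (w : Fin (m + d) → ZMod 2) : Decidable (inWin i w) := by
  unfold inWin; infer_instance

lemma win_ext (i : Fin (m + 1)) (y : Fin d → ZMod 2) : win i (ext i y) = y := by
  funext t
  have ht := t.isLt
  simp only [win, ext]
  rw [dif_pos (by omega)]
  congr 1
  apply Fin.ext
  show i.val + t.val - i.val = t.val
  omega

lemma inWin_ext (i : Fin (m + 1)) (y : Fin d → ZMod 2) : inWin i (ext i y) := by
  intro j hj
  by_contra h
  exact hj (by simp only [ext, dif_neg h])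

lemma ext_win (i : Fin (m + 1)) (x : Fin (m + d) → ZMod 2)
    (h : ∀ j, x j ≠ 0 → i.val ≤ j.val ∧ j.val < i.val + d) : ext i (win i x) = x := by
  funext j
  simp only [ext, win]
  by_cases hj : i.val ≤ j.val ∧ j.val < i.val + d
  · rw [dif_pos hj]
    congr 1
    apply Fin.ext
    show i.val + (j.val - i.val) = j.val
    omega
  · rw [dif_neg hj]
    by_contra hx
    exact hj (h j fun hz => hx hz.symm)

lemma wt_win (i : Fin (m + 1)) (w : Fin (m + d) → ZMod 2) (hin : inWin i w) :
    wt (win i w) = wt w := by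
  unfold wt
  refine Finset.card_bij' (fun (t : Fin d) _ =>
      (⟨i.val + t.val, by have := i.isLt; have := t.isLt; omega⟩ : Fin (m + d)))
    (fun (j : Fin (m + d)) hj =>
      (⟨j.val - i.val, by
        have h1 := hin j (by simpa using hj)
        omega⟩ : Fin d)) ?hi ?hj ?left ?right
  case hi =>
    intro t ht
    rw [Finset.mem_filter] at ht
    simpa [win] using ht.2
  case hj =>
    intro j hj
    simp only [Finset.mem_filter, Finset.mem_univ, true_and] at hj ⊢
    have h1 := hin j hj
    simp only [win]
    convert hj using 2
    apply Fin.ext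
    show i.val + (j.val - i.val) = j.val
    omega
  case left =>
    intro t ht
    apply Fin.ext
    show i.val + t.val - i.val = t.val
    omega
  case right =>
    intro j hj
    simp only [Finset.mem_filter, Finset.mem_univ, true_and] at hj
    have h1 := hin j hj
    apply Fin.ext
    show i.val + (j.val - i.val) = j.val
    omega

lemma moebius_win (f : (Fin d → ZMod 2) → ZMod 2) (i : Fin (m + 1))
    (w : Fin (m + d) → ZMod 2) :
    moebius (fun x => f (win i x)) w = if inWin i w then moebius f (win i w) else 0 := by
  by_cases hin : inWin i w
  · rw [if_pos hin]
    unfold moebius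
    refine Finset.sum_bij' (fun x _ => win i x) (fun y _ => ext i y) ?hi ?hj ?left ?right ?h
    case hi =>
      intro x hx
      simp only [Finset.mem_filter, Finset.mem_univ, true_and] at hx ⊢
      intro t ht
      exact hx _ ht
    case hj =>
      intro y hy
      simp only [Finset.mem_filter, Finset.mem_univ, true_and] at hy ⊢
      intro j hj
      simp only [ext] at hj
      by_cases h : i.val ≤ j.val ∧ j.val < i.val + d
      · rw [dif_pos h] at hj
        have h2 := hy _ hj
        simp only [win] at h2
        convert h2 using 2
        apply Fin.ext
        show j.val = i.val + (j.val - i.val)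
        omega
      · rw [dif_neg h] at hj; exact absurd rfl hj
    case left =>
      intro x hx
      simp only [Finset.mem_filter, Finset.mem_univ, true_and] at hx
      exact ext_win i x (fun j hj => hin j (hx j hj))
    case right =>
      intro y _
      exact win_ext i y
    case h =>
      intro x _
      rfl
  · rw [if_neg hin]
    unfold inWin at hin
    push_neg at hin
    obtain ⟨j0, hj0, hj0w⟩ := hin
    unfold moebius
    refine Finset.sum_involution (fun x _ => Function.update x j0 (x j0 + 1)) ?h ?ne ?mem ?inv
    case h =>
      intro x hx
      have hw : win i (Function.update x j0 (x j0 + 1)) = win i x := by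
        funext t
        simp only [win]
        rw [Function.update_of_ne]
        intro h
        have hv : i.val + t.val = j0.val := congrArg Fin.val h
        have ht := t.isLt
        have := hj0w (by omega)
        omega
      rw [hw]
      exact CharTwo.add_self_eq_zero _
    case ne =>
      intro x hx _ h
      have h1 : x j0 + 1 = x j0 := by simpa using congrFun h j0
      have h2 : (1 : ZMod 2) = 0 :=
        add_left_cancel (a := x j0) (b := 1) (c := 0) (by rw [add_zero]; exact h1)
      exact one_ne_zero h2
    case mem =>
      intro x hx
      simp only [Finset.mem_filter, Finset.mem_univ, true_and] at hx ⊢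
      intro t ht
      by_cases h : t = j0
      · subst h; exact hj0
      · rw [Function.update_of_ne h] at ht
        exact hx t ht
    case inv =>
      intro x hx
      funext t
      by_cases h : t = j0
      · subst h
        simp only [Function.update_self]
        have h11 : (1 : ZMod 2) + 1 = 0 := by decide
        rw [add_assoc, h11, add_zero]
      · simp [Function.update_of_ne h]


lemma moebius_sum_comm {n k : ℕ} (c : Fin k → ZMod 2)
    (G : Fin k → (Fin n → ZMod 2) → ZMod 2) (w : Fin n → ZMod 2) :
    moebius (fun x => ∑ i, c i * G i x) w = ∑ i, c i * moebius (G i) w := by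
  unfold moebius
  rw [Finset.sum_comm]
  exact Finset.sum_congr rfl fun i _ => by rw [Finset.mul_sum]

end CAaux

/-- For a no-boundary CA `F : F_2^{m+d} → F_2^{m+1}` with local rule `f` of
degree at least 1, every nonzero component function `v·F` has algebraic degree
equal to the algebraic degree of `f`. -/
theorem ca_component_degree (m d : ℕ)
    (f : (Fin d → ZMod 2) → ZMod 2) (hdeg : 1 ≤ degB f)
    (F : (Fin (m + d) → ZMod 2) → Fin (m + 1) → ZMod 2)
    (hF : ∀ x (i : Fin (m + 1)), F x i =
      f (fun j : Fin d => x ⟨i.val + j.val, by have := i.isLt; have := j.isLt; omega⟩))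
    (v : Fin (m + 1) → ZMod 2) (hv : v ≠ 0) :
    degB (fun x => ∑ i, v i * F x i) = degB f := by
  classical
  have e1 : (fun x => ∑ i, v i * F x i) =
      (fun x => ∑ i, v i * f (CAaux.win i x)) := by
    funext x
    exact Finset.sum_congr rfl fun i _ => by rw [hF x i]; rfl
  have key : ∀ w, moebius (fun x => ∑ i, v i * F x i) w =
      ∑ i, v i * (if CAaux.inWin i w then moebius f (CAaux.win i w) else 0) := by
    intro w
    rw [e1, CAaux.moebius_sum_comm (G := fun i x => f (CAaux.win i x))]
    exact Finset.sum_congr rfl fun i _ => by rw [CAaux.moebius_win]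
  -- upper bound
  have hub : degB (fun x => ∑ i, v i * F x i) ≤ degB f := by
    apply Finset.sup_le
    intro w hw
    simp only [Finset.mem_filter, Finset.mem_univ, true_and] at hw
    rw [key w] at hw
    obtain ⟨i, -, hi⟩ := Finset.exists_ne_zero_of_sum_ne_zero hw
    by_cases hin : CAaux.inWin i w
    · rw [if_pos hin] at hi
      have hmf : moebius f (CAaux.win i w) ≠ 0 := fun h => hi (by rw [h, mul_zero])
      have h2 : CAaux.wt (CAaux.win i w) ≤ degB f := by
        unfold degB CAaux.wt
        exact Finset.le_sup
          (f := fun u : Fin d → ZMod 2 => (Finset.univ.filter (fun t => u t ≠ 0)).card)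
          (Finset.mem_filter.mpr ⟨Finset.mem_univ _, hmf⟩)
      rw [CAaux.wt_win i w hin] at h2
      exact h2
    · rw [if_neg hin, mul_zero] at hi; exact absurd rfl hi
  -- choose a top-degree monomial with maximal rightmost variable
  have hBne : (Finset.univ.filter (fun u : Fin d → ZMod 2 => moebius f u ≠ 0)).Nonempty := by
    by_contra h
    rw [Finset.not_nonempty_iff_eq_empty] at h
    unfold degB at hdeg
    rw [h] at hdeg
    simp at hdeg
  obtain ⟨u0, hu0mem, hu0⟩ := Finset.exists_mem_eq_sup _ hBne
    (fun u : Fin d → ZMod 2 => (Finset.univ.filter (fun i => u i ≠ 0)).card)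
  have hu0' : degB f = CAaux.wt u0 := hu0
  clear hu0
  set B := Finset.univ.filter
    (fun u : Fin d → ZMod 2 => moebius f u ≠ 0 ∧ CAaux.wt u = degB f) with hB
  have hBne2 : B.Nonempty := by
    refine ⟨u0, ?_⟩
    simp only [hB, Finset.mem_filter, Finset.mem_univ, true_and]
    simp only [Finset.mem_filter, Finset.mem_univ, true_and] at hu0mem
    exact ⟨hu0mem, hu0'.symm⟩
  obtain ⟨u, huB, hmax⟩ := Finset.exists_max_image B
    (fun z : Fin d → ZMod 2 =>
      (Finset.univ.filter (fun t => z t ≠ 0)).sup (fun t : Fin d => (t : ℕ))) hBne2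
  simp only [hB, Finset.mem_filter, Finset.mem_univ, true_and] at huB
  obtain ⟨huf, huw⟩ := huB
  -- maximal index with nonzero v
  have hCne : (Finset.univ.filter (fun i : Fin (m + 1) => v i ≠ 0)).Nonempty := by
    by_contra h
    rw [Finset.not_nonempty_iff_eq_empty] at h
    apply hv
    funext i
    by_contra hvi
    have : i ∈ Finset.univ.filter (fun i : Fin (m + 1) => v i ≠ 0) := by simpa using hvi
    rw [h] at this
    exact absurd this (Finset.notMem_empty i)
  obtain ⟨i0, hi0mem, hi0max⟩ := Finset.exists_max_image _ (fun i : Fin (m + 1) => (i : ℕ)) hCne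
  have hvi0 : v i0 ≠ 0 := by simpa using hi0mem
  -- rightmost variable of u
  have hsuppne : (Finset.univ.filter (fun t => u t ≠ 0)).Nonempty := by
    by_contra h
    rw [Finset.not_nonempty_iff_eq_empty] at h
    have h0 : CAaux.wt u = 0 := by rw [CAaux.wt, h]; rfl
    omega
  obtain ⟨tmax, htmaxmem, htmax⟩ := Finset.exists_mem_eq_sup _ hsuppne (fun t : Fin d => (t : ℕ))
  have htmaxne : u tmax ≠ 0 := by simpa using htmaxmem
  set w := CAaux.ext i0 u with hwdef
  have hwin0 : CAaux.win i0 w = u := CAaux.win_ext i0 u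
  have hinw : CAaux.inWin i0 w := CAaux.inWin_ext i0 u
  have hwtw : CAaux.wt w = degB f := by
    have h1 := CAaux.wt_win i0 w hinw
    rw [hwin0] at h1
    omega
  have hmw : moebius (fun x => ∑ i, v i * F x i) w = moebius f u := by
    rw [key w, Finset.sum_eq_single i0]
    · rw [if_pos hinw, hwin0]
      have h1 : v i0 = 1 := by
        have : ∀ a : ZMod 2, a ≠ 0 → a = 1 := by decide
        exact this _ hvi0
      rw [h1, one_mul]
    · intro i _ hne
      by_cases hvi : v i = 0
      · rw [hvi, zero_mul]
      · have hile : (i : ℕ) ≤ (i0 : ℕ) := hi0max i (by simpa using hvi)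
        have hilt : (i : ℕ) < (i0 : ℕ) := lt_of_le_of_ne hile (fun h => hne (Fin.ext h))
        by_cases hin : CAaux.inWin i w
        · rw [if_pos hin]
          by_cases hmu' : moebius f (CAaux.win i w) = 0
          · rw [hmu', mul_zero]
          · exfalso
            have hwt' : CAaux.wt (CAaux.win i w) = degB f := by
              rw [CAaux.wt_win i w hin]; exact hwtw
            have hmem' : CAaux.win i w ∈ B := by
              simp only [hB, Finset.mem_filter, Finset.mem_univ, true_and]
              exact ⟨hmu', hwt'⟩
            have hle := hmax _ hmem'
            beta_reduce at hle
            have hwidx : w (⟨i0.val + tmax.val,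
                by have := i0.isLt; have := tmax.isLt; omega⟩ : Fin (m + d)) ≠ 0 := by
              have h3 : CAaux.win i0 w tmax ≠ 0 := by rw [hwin0]; exact htmaxne
              exact h3
            have hbound := hin _ hwidx
            have hb2 : (i : ℕ) ≤ i0.val + tmax.val ∧ i0.val + tmax.val < i.val + d := hbound
            have htd : i0.val + tmax.val - i.val < d := by omega
            have hu't : CAaux.win i w ⟨i0.val + tmax.val - i.val, htd⟩ ≠ 0 := by
              show w ⟨i.val + (i0.val + tmax.val - i.val), by omega⟩ ≠ 0
              convert hwidx using 2
              apply Fin.ext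
              show i.val + (i0.val + tmax.val - i.val) = i0.val + tmax.val
              omega
            have hsup' : i0.val + tmax.val - i.val ≤
                (Finset.univ.filter (fun t => CAaux.win i w t ≠ 0)).sup
                  (fun t : Fin d => (t : ℕ)) :=
              Finset.le_sup (f := fun t : Fin d => (t : ℕ))
                (b := ⟨i0.val + tmax.val - i.val, htd⟩)
                (Finset.mem_filter.mpr ⟨Finset.mem_univ _, hu't⟩)
            rw [htmax] at hle
            omega
        · rw [if_neg hin, mul_zero]
    · intro h; exact absurd (Finset.mem_univ i0) h
  have hlb : degB f ≤ degB (fun x => ∑ i, v i * F x i) := by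
    have hwmem : w ∈ Finset.univ.filter
        (fun w' : Fin (m + d) → ZMod 2 =>
          moebius (fun x => ∑ i, v i * F x i) w' ≠ 0) := by
      simp only [Finset.mem_filter, Finset.mem_univ, true_and]
      rw [hmw]; exact huf
    have h4 := Finset.le_sup
      (f := fun w' : Fin (m + d) → ZMod 2 => (Finset.univ.filter (fun j => w' j ≠ 0)).card)
      hwmem
    calc degB f = CAaux.wt w := hwtw.symm
      _ ≤ _ := h4
  exact le_antisymm hub hlb
end

section
/- Let H : F_2^{2b} → F_2^{2b} be the superposition S-box of two CA with nonlinear bipermutive local rules f, g of diameter d = b+1. If v ∈ F_2^{2b} is a nonzero vector such that the component function v·H is affine, then the support of v intersects both {1,…,b} and {b+1,…,2b}. -/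
/-- A Boolean function is affine if it is of the form `x ↦ a·x ⊕ c`. -/
def IsAffine {n : ℕ} (g : (Fin n → ZMod 2) → ZMod 2) : Prop :=
  ∃ (a : Fin n → ZMod 2) (c : ZMod 2), ∀ x, g x = (∑ i, a i * x i) + c

lemma flip_sum_zero {n : ℕ} (w : Fin n → ZMod 2) (h : (Fin n → ZMod 2) → ZMod 2)
    (p : Fin n) (hp : w p ≠ 0)
    (hinv : ∀ x, h (Function.update x p (x p + 1)) = h x) :
    moebius h w = 0 := by
  have h11 : (1 : ZMod 2) + 1 = 0 := by decide
  have hmem : ∀ x ∈ Finset.univ.filter (fun x : Fin n → ZMod 2 => ∀ i, x i ≠ 0 → w i ≠ 0),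
      Function.update x p (x p + 1) ∈
        Finset.univ.filter (fun x : Fin n → ZMod 2 => ∀ i, x i ≠ 0 → w i ≠ 0) := by
    intro x hx
    simp only [Finset.mem_filter, Finset.mem_univ, true_and] at hx ⊢
    intro i hi
    by_cases hip : i = p
    · subst hip; exact hp
    · rw [Function.update_of_ne hip] at hi
      exact hx i hi
  have hflip2 : ∀ x : Fin n → ZMod 2,
      Function.update (Function.update x p (x p + 1)) p
        (Function.update x p (x p + 1) p + 1) = x := by
    intro x
    have hval : Function.update x p (x p + 1) p + 1 = x p := by
      rw [Function.update_self, add_assoc, h11, add_zero]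
    rw [hval, Function.update_idem, Function.update_eq_self]
  unfold moebius
  refine Finset.sum_involution (fun x _ => Function.update x p (x p + 1))
    ?_ ?_ hmem ?_
  · intro x _
    rw [hinv]
    exact CharTwo.add_self_eq_zero _
  · intro x _ _ heq
    have h2 := congrFun heq p
    simp only [Function.update_self] at h2
    nth_rewrite 2 [← add_zero (x p)] at h2
    exact one_ne_zero (add_left_cancel h2)
  · intro x _
    exact hflip2 x

lemma moebius_const {n : ℕ} (c : ZMod 2) (w : Fin n → ZMod 2) (p : Fin n) (hp : w p ≠ 0) :
    moebius (fun _ => c) w = 0 :=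
  flip_sum_zero w _ p hp (fun _ => rfl)

lemma moebius_coord {n : ℕ} (a : ZMod 2) (i : Fin n) (w : Fin n → ZMod 2)
    (p : Fin n) (hp : w p ≠ 0) (hpi : p ≠ i) :
    moebius (fun x => a * x i) w = 0 :=
  flip_sum_zero w _ p hp (fun x => by rw [Function.update_of_ne (Ne.symm hpi)])

lemma moebius_affine {n : ℕ} (a : Fin n → ZMod 2) (c : ZMod 2) (w : Fin n → ZMod 2)
    (hw : 2 ≤ (Finset.univ.filter (fun i => w i ≠ 0)).card) :
    moebius (fun x => (∑ i, a i * x i) + c) w = 0 := by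
  obtain ⟨p, hp, q, hq, hpq⟩ := Finset.one_lt_card.mp hw
  simp only [Finset.mem_filter, Finset.mem_univ, true_and] at hp hq
  have step : moebius (fun x => (∑ i, a i * x i) + c) w
      = (∑ i : Fin n, moebius (fun x => a i * x i) w) + moebius (fun _ => c) w := by
    unfold moebius
    rw [Finset.sum_add_distrib, Finset.sum_comm]
  rw [step, moebius_const c w p hp, add_zero]
  apply Finset.sum_eq_zero
  intro i _
  rcases ne_or_eq p i with h | h
  · exact moebius_coord (a i) i w p hp h
  · exact moebius_coord (a i) i w q hq (by subst h; exact Ne.symm hpq)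

lemma moebius_sum {n k : ℕ} (c : Fin k → ZMod 2) (F : Fin k → (Fin n → ZMod 2) → ZMod 2)
    (w : Fin n → ZMod 2) :
    moebius (fun x => ∑ i, c i * F i x) w = ∑ i, c i * moebius (F i) w := by
  unfold moebius
  rw [Finset.sum_comm]
  simp_rw [Finset.mul_sum]

lemma moebius_comp {n k : ℕ} (f : (Fin k → ZMod 2) → ZMod 2) (ι : Fin k → Fin n)
    (hι : Function.Injective ι) (w : Fin n → ZMod 2) :
    moebius (fun x => f (fun j => x (ι j))) w =
      if ∀ p, w p ≠ 0 → ∃ j, ι j = p then moebius f (fun j => w (ι j)) else 0 := by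
  split_ifs with hcond
  · unfold moebius
    refine Finset.sum_bij' (fun x _ => fun j => x (ι j))
      (fun y _ => fun p => if h : ∃ j, ι j = p then y h.choose else 0) ?_ ?_ ?_ ?_ ?_
    · intro x hx
      simp only [Finset.mem_filter, Finset.mem_univ, true_and] at hx ⊢
      intro j hj
      exact hx (ι j) hj
    · intro y hy
      simp only [Finset.mem_filter, Finset.mem_univ, true_and] at hy ⊢
      intro p hp
      by_cases h : ∃ j, ι j = p
      · rw [dif_pos h] at hp
        have := hy h.choose hp
        rwa [h.choose_spec] at this
      · rw [dif_neg h] at hp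
        exact absurd rfl hp
    · intro x hx
      simp only [Finset.mem_filter, Finset.mem_univ, true_and] at hx
      funext p
      by_cases h : ∃ j, ι j = p
      · show (if h : ∃ j, ι j = p then x (ι h.choose) else 0) = x p
        rw [dif_pos h, h.choose_spec]
      · show (if h : ∃ j, ι j = p then x (ι h.choose) else 0) = x p
        rw [dif_neg h]
        by_contra h0
        have hxp : x p ≠ 0 := fun hc => h0 hc.symm
        exact h (hcond p (hx p hxp))
    · intro y _
      funext j
      have hex : ∃ j', ι j' = ι j := ⟨j, rfl⟩
      show (if h : ∃ j', ι j' = ι j then y h.choose else 0) = y j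
      rw [dif_pos hex]
      exact congrArg y (hι hex.choose_spec)
    · intro x _
      rfl
  · push_neg at hcond
    obtain ⟨p, hp, hpnr⟩ := hcond
    exact flip_sum_zero w _ p hp (fun x => by
      congr 1
      funext j
      exact Function.update_of_ne (fun hc => hpnr j hc) _ _)

lemma not_affine_comb (m : ℕ) (f : (Fin (m + 2) → ZMod 2) → ZMod 2)
    (hfdeg : 2 ≤ degB f) (c : Fin (m + 1) → ZMod 2) (hc : c ≠ 0) :
    ¬ IsAffine (fun x : Fin ((m + 1) + (m + 1)) → ZMod 2 =>
      ∑ i : Fin (m + 1), c i * f (fun j : Fin (m + 2) =>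
        x ⟨i.val + j.val, by have := i.isLt; have := j.isLt; omega⟩)) := by
  rintro ⟨a, cst, haff⟩
  have hbound : ∀ (i : Fin (m+1)) (j : Fin (m+2)), i.val + j.val < (m+1)+(m+1) := by
    intro i j; have := i.isLt; have := j.isLt; omega
  set ι : Fin (m+1) → Fin (m+2) → Fin ((m+1)+(m+1)) :=
    fun i j => ⟨i.val + j.val, hbound i j⟩ with hιdef
  have hιinj : ∀ i, Function.Injective (ι i) := by
    intro i j1 j2 h
    have h2 : i.val + j1.val = i.val + j2.val := congrArg Fin.val h
    exact Fin.ext (by omega)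
  -- a nonlinear monomial of f with maximal top variable
  unfold degB at hfdeg
  obtain ⟨u0, hu0mem, hu0⟩ := (Finset.le_sup_iff (by norm_num : (0:ℕ) < 2)).mp hfdeg
  set U : Finset (Fin (m+2) → ZMod 2) :=
    Finset.univ.filter (fun u => moebius f u ≠ 0 ∧
      2 ≤ (Finset.univ.filter (fun i => u i ≠ 0)).card) with hUdef
  have hUne : U.Nonempty :=
    ⟨u0, Finset.mem_filter.mpr ⟨Finset.mem_univ _, (Finset.mem_filter.mp hu0mem).2, hu0⟩⟩
  obtain ⟨u, huU, humax⟩ := Finset.exists_max_image U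
    (fun u => (Finset.univ.filter (fun i => u i ≠ 0)).sup Fin.val) hUne
  obtain ⟨-, huf, hucard⟩ := Finset.mem_filter.mp huU
  -- the top shift
  set C : Finset (Fin (m+1)) := Finset.univ.filter (fun i => c i ≠ 0) with hCdef
  have hCne : C.Nonempty := by
    obtain ⟨i, hi⟩ := Function.ne_iff.mp hc
    exact ⟨i, Finset.mem_filter.mpr ⟨Finset.mem_univ _, hi⟩⟩
  set i0 := C.max' hCne with hi0def
  have hi0 : c i0 ≠ 0 := (Finset.mem_filter.mp (C.max'_mem hCne)).2
  have hi0max : ∀ i, c i ≠ 0 → i ≤ i0 := fun i hi =>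
    C.le_max' i (Finset.mem_filter.mpr ⟨Finset.mem_univ _, hi⟩)
  -- the shifted monomial
  set w : Fin ((m+1)+(m+1)) → ZMod 2 :=
    fun p => if h : ∃ j, ι i0 j = p then u h.choose else 0 with hwdef
  have hw1 : ∀ j, w (ι i0 j) = u j := by
    intro j
    have hex : ∃ j', ι i0 j' = ι i0 j := ⟨j, rfl⟩
    show (if h : ∃ j', ι i0 j' = ι i0 j then u h.choose else 0) = u j
    rw [dif_pos hex]
    exact congrArg u (hιinj i0 hex.choose_spec)
  have hw2 : ∀ p, w p ≠ 0 → ∃ j, ι i0 j = p := by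
    intro p hp
    by_contra h
    have : w p = 0 := by
      show (if h : ∃ j, ι i0 j = p then u h.choose else 0) = 0
      rw [dif_neg h]
    exact hp this
  have hsuppw : 2 ≤ (Finset.univ.filter (fun p => w p ≠ 0)).card := by
    refine le_trans hucard (Finset.card_le_card_of_injOn (ι i0) ?_ ?_)
    · intro j hj
      simp only [Finset.mem_coe, Finset.mem_filter, Finset.mem_univ, true_and] at hj ⊢
      rw [hw1]; exact hj
    · exact fun a1 _ b1 _ h => hιinj i0 h
  -- the component function is affine, so its moebius at w vanishes
  have hGaff : moebius (fun x => ∑ i, c i * f (fun j => x (ι i j))) w = 0 := by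
    have heq : (fun x : Fin ((m+1)+(m+1)) → ZMod 2 => ∑ i, c i * f (fun j => x (ι i j)))
        = fun x => (∑ i, a i * x i) + cst := funext haff
    rw [heq]
    exact moebius_affine a cst w hsuppw
  -- but it is nonzero
  have hGne : moebius (fun x => ∑ i, c i * f (fun j => x (ι i j))) w ≠ 0 := by
    have step : moebius (fun x => ∑ i, c i * f (fun j => x (ι i j))) w
        = ∑ i, c i * moebius (fun x => f (fun j => x (ι i j))) w :=
      moebius_sum c (fun i x => f (fun j => x (ι i j))) w
    have hsingle : (∑ i, c i * moebius (fun x => f (fun j => x (ι i j))) w)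
        = c i0 * moebius (fun x => f (fun j => x (ι i0 j))) w := by
      apply Finset.sum_eq_single
      · intro i _ hne
        by_cases hci : c i = 0
        · rw [hci, zero_mul]
        · rw [moebius_comp f (ι i) (hιinj i) w]
          split_ifs with hcond
          · suffices hz : moebius f (fun j => w (ι i j)) = 0 by rw [hz, mul_zero]
            by_contra hy
            have hii0 : i.val < i0.val := by
              have hle := hi0max i hci
              rcases lt_or_eq_of_le hle with hlt | heq
              · exact hlt
              · exact absurd heq hne
            have key : ∀ j' : Fin (m+2), u j' ≠ 0 →
                ∃ jj : Fin (m+2), w (ι i jj) ≠ 0 ∧ i.val + jj.val = i0.val + j'.val := by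
              intro j' hj'
              have hwp : w (ι i0 j') ≠ 0 := by rw [hw1]; exact hj'
              obtain ⟨jj, hjj⟩ := hcond _ hwp
              refine ⟨jj, ?_, ?_⟩
              · rw [hjj]; exact hwp
              · exact congrArg Fin.val hjj
            choose F hF1 hF2 using key
            have hycard : 2 ≤ (Finset.univ.filter (fun jj => w (ι i jj) ≠ 0)).card := by
              refine le_trans hucard (Finset.card_le_card_of_injOn
                (fun j' => if h : u j' ≠ 0 then F j' h else ⟨0, Nat.succ_pos _⟩) ?_ ?_)
              · intro j' hj'
                simp only [Finset.mem_coe, Finset.mem_filter, Finset.mem_univ, true_and] at hj' ⊢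
                rw [dif_pos hj']
                exact hF1 j' hj'
              · intro a1 ha1 b1 hb1 hab
                simp only [Finset.coe_filter, Finset.mem_univ, true_and,
                  Set.mem_setOf_eq] at ha1 hb1
                simp only [dif_pos ha1, dif_pos hb1] at hab
                have e1 := hF2 a1 ha1
                have e2 := hF2 b1 hb1
                have e3 : (F a1 ha1).val = (F b1 hb1).val := congrArg Fin.val hab
                refine Fin.ext ?_
                clear * - e1 e2 e3 hii0
                omega
            have hyU : (fun jj => w (ι i jj)) ∈ U := by
              simp only [hUdef, Finset.mem_filter, Finset.mem_univ, true_and]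
              exact ⟨hy, hycard⟩
            have hMy := humax _ hyU
            have hsune : (Finset.univ.filter (fun j => u j ≠ 0)).Nonempty :=
              Finset.card_pos.mp (by clear * - hucard; omega)
            obtain ⟨jmax, hjmaxmem, hjmaxeq⟩ :=
              Finset.exists_mem_eq_sup _ hsune (Fin.val (n := m+2))
            have hjmax : u jmax ≠ 0 :=
              (Finset.mem_filter.mp hjmaxmem).2
            have e1 := hF2 jmax hjmax
            have hle : (F jmax hjmax).val
                ≤ (Finset.univ.filter (fun jj => w (ι i jj) ≠ 0)).sup Fin.val :=
              Finset.le_sup (Finset.mem_filter.mpr ⟨Finset.mem_univ _, hF1 jmax hjmax⟩)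
            clear * - hMy hjmaxeq e1 hle hii0
            omega
          · rw [mul_zero]
      · intro h
        exact absurd (Finset.mem_univ i0) h
    have he2 : (fun j => w (ι i0 j)) = u := funext hw1
    rw [step, hsingle, moebius_comp f (ι i0) (hιinj i0) w, if_pos hw2, he2]
    exact mul_ne_zero hi0 huf
  exact hGne hGaff

/-- If `v·H` is an affine component of the superposition S-box of two CA with
nonlinear bipermutive rules, then the support of `v` meets both halves
`{1,…,b}` and `{b+1,…,2b}` (here `b = m + 1`). -/
theorem affine_component_support_meets_both_halves (m : ℕ)
    (f g : (Fin (m + 2) → ZMod 2) → ZMod 2)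
    (f' g' : (Fin m → ZMod 2) → ZMod 2)
    (hf : ∀ x, f x = x 0 + f' (fun i => x i.succ.castSucc) + x (Fin.last (m + 1)))
    (hg : ∀ x, g x = x 0 + g' (fun i => x i.succ.castSucc) + x (Fin.last (m + 1)))
    (hfdeg : 2 ≤ degB f) (hgdeg : 2 ≤ degB g)
    (H : (Fin ((m + 1) + (m + 1)) → ZMod 2) → Fin ((m + 1) + (m + 1)) → ZMod 2)
    (hH : ∀ x (i : Fin (m + 1)),
      H x (Fin.castAdd (m + 1) i) =
        f (fun j : Fin (m + 2) => x ⟨i.val + j.val, by have := i.isLt; have := j.isLt; omega⟩) ∧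
      H x (Fin.natAdd (m + 1) i) =
        g (fun j : Fin (m + 2) => x ⟨i.val + j.val, by have := i.isLt; have := j.isLt; omega⟩))
    (v : Fin ((m + 1) + (m + 1)) → ZMod 2) (hv : v ≠ 0)
    (hlin : IsAffine (fun x => ∑ i, v i * H x i)) :
    (∃ i : Fin (m + 1), v (Fin.castAdd (m + 1) i) ≠ 0) ∧
    (∃ i : Fin (m + 1), v (Fin.natAdd (m + 1) i) ≠ 0) := by
  constructor
  · by_contra hno
    push_neg at hno
    have hc : (fun i => v (Fin.natAdd (m+1) i)) ≠ 0 := by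
      intro h0
      apply hv
      funext k
      exact Fin.addCases (fun i => hno i) (fun i => congrFun h0 i) k
    refine not_affine_comb m g hgdeg (fun i => v (Fin.natAdd (m+1) i)) hc ?_
    have heq : (fun x : Fin ((m+1)+(m+1)) → ZMod 2 => ∑ i, v i * H x i)
        = (fun x => ∑ i : Fin (m+1), v (Fin.natAdd (m+1) i) *
            g (fun j : Fin (m+2) =>
              x ⟨i.val + j.val, by have := i.isLt; have := j.isLt; omega⟩)) := by
      funext x
      rw [Fin.sum_univ_add]
      have hz : (∑ i : Fin (m+1), v (Fin.castAdd (m+1) i) * H x (Fin.castAdd (m+1) i)) = 0 :=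
        Finset.sum_eq_zero (fun i _ => by rw [hno i, zero_mul])
      rw [hz, zero_add]
      exact Finset.sum_congr rfl (fun i _ => by rw [(hH x i).2])
    rw [heq] at hlin
    exact hlin
  · by_contra hno
    push_neg at hno
    have hc : (fun i => v (Fin.castAdd (m+1) i)) ≠ 0 := by
      intro h0
      apply hv
      funext k
      exact Fin.addCases (fun i => congrFun h0 i) (fun i => hno i) k
    refine not_affine_comb m f hfdeg (fun i => v (Fin.castAdd (m+1) i)) hc ?_
    have heq : (fun x : Fin ((m+1)+(m+1)) → ZMod 2 => ∑ i, v i * H x i)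
        = (fun x => ∑ i : Fin (m+1), v (Fin.castAdd (m+1) i) *
            f (fun j : Fin (m+2) =>
              x ⟨i.val + j.val, by have := i.isLt; have := j.isLt; omega⟩)) := by
      funext x
      rw [Fin.sum_univ_add]
      have hz : (∑ i : Fin (m+1), v (Fin.natAdd (m+1) i) * H x (Fin.natAdd (m+1) i)) = 0 :=
        Finset.sum_eq_zero (fun i _ => by rw [hno i, zero_mul])
      rw [hz, add_zero]
      exact Finset.sum_congr rfl (fun i _ => by rw [(hH x i).1])
    rw [heq] at hlin
    exact hlin
end
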